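/- arXiv:2208.06039 — 5 statements merged into one kernel-verified Lean document; each statement's English description precedes it below -/
import Mathlib

section
/- Under informative sampling with inclusion probability P(δ=1 | X,Y,W) = W⁻¹, the conditional sampling probability satisfies π(x,y) := P(δ=1 | X=x, Y=y) = 1 / E[W | X=x, Y=y, δ=1]; that is, the reciprocal of the conditional expectation of the weight given the sampled data equals the conditional inclusion probability. -/
open MeasureTheory

/-- Under informative sampling with `P(δ=1 | X,Y,W) = W⁻¹`, the conditional inclusion
probability `π(x,y) = P(δ=1 | X,Y)` equals the reciprocal of the conditional expectation
of the weight given the sampled data, `E[W | X,Y,δ=1] = E[δW | X,Y] / E[δ | X,Y]`. -/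
theorem pi_eq_inv_sampled_weight_mean
    {Ω : Type*} [m0 : MeasurableSpace Ω] (μ : Measure Ω) [IsProbabilityMeasure μ]
    (X Y W δ : Ω → ℝ)
    (hX : Measurable X) (hY : Measurable Y) (hWm : Measurable W)
    (hδ01 : ∀ ω, δ ω = 0 ∨ δ ω = 1)
    (hW : ∀ᵐ ω ∂μ, 1 < W ω)
    (hcond : μ[δ | MeasurableSpace.comap (fun ω => (X ω, Y ω, W ω)) inferInstance]
      =ᵐ[μ] fun ω => (W ω)⁻¹)
    (hint : Integrable (fun ω => δ ω * W ω) μ)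
    (hpos : ∀ᵐ ω ∂μ,
      0 < (μ[δ | MeasurableSpace.comap (fun ω => (X ω, Y ω)) inferInstance]) ω) :
    ∀ᵐ ω ∂μ,
      (μ[δ | MeasurableSpace.comap (fun ω => (X ω, Y ω)) inferInstance]) ω
        = ((μ[fun ω => δ ω * W ω | MeasurableSpace.comap (fun ω => (X ω, Y ω)) inferInstance]) ω
            / (μ[δ | MeasurableSpace.comap (fun ω => (X ω, Y ω)) inferInstance]) ω)⁻¹ := by
  set m3 : MeasurableSpace Ω :=
    MeasurableSpace.comap (fun ω => (X ω, Y ω, W ω)) inferInstance with hm3def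
  set m2 : MeasurableSpace Ω :=
    MeasurableSpace.comap (fun ω => (X ω, Y ω)) inferInstance with hm2def
  have hm3 : m3 ≤ m0 := by
    rw [hm3def, MeasurableSpace.comap_le_iff_le_map]
    exact fun s hs => ((hX.prodMk (hY.prodMk hWm)) hs)
  have hφ : Measurable[m3] (fun ω => (X ω, Y ω, W ω)) :=
    Measurable.of_comap_le le_rfl
  have hm23 : m2 ≤ m3 := by
    rw [hm2def, MeasurableSpace.comap_le_iff_le_map]
    intro s hs
    exact ((measurable_fst.prodMk (measurable_fst.comp measurable_snd)) hs).preimage hφ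
  -- W is m3-measurable
  have hWm3 : StronglyMeasurable[m3] W :=
    ((measurable_snd.comp measurable_snd).comp hφ).stronglyMeasurable
  -- δ is integrable
  have hδae : AEStronglyMeasurable[m0] δ μ := by
    have : δ =ᵐ[μ] fun ω => (δ ω * W ω) * (W ω)⁻¹ := by
      filter_upwards [hW] with ω hω
      field_simp
    exact (hint.aestronglyMeasurable.mul (hWm.inv.aestronglyMeasurable)).congr this.symm
  have hδint : Integrable δ μ := by
    refine ⟨hδae, ?_⟩
    refine HasFiniteIntegral.mono' (integrable_const (1:ℝ)).hasFiniteIntegral ?_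
    filter_upwards with ω
    rcases hδ01 ω with h | h <;> simp [h]
  -- Pull-out: μ[W * δ | m3] = W * μ[δ | m3] =ᵐ 1
  have hWδint : Integrable (W * δ) μ := by
    have : W * δ = fun ω => δ ω * W ω := by ext ω; exact mul_comm _ _
    rw [this]; exact hint
  have h1 : μ[fun ω => δ ω * W ω | m3] =ᵐ[μ] fun _ => (1:ℝ) := by
    have hpull := condExp_mul_of_stronglyMeasurable_left (μ := μ) hWm3 hWδint hδint
    have heq : (fun ω => δ ω * W ω) = W * δ := by ext ω; exact mul_comm _ _
    rw [heq]
    refine hpull.trans ?_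
    filter_upwards [hcond, hW] with ω hc hw
    have : W ω ≠ 0 := by linarith
    simp only [Pi.mul_apply, hc]
    field_simp
  -- Tower: μ[δW | m2] =ᵐ 1
  have h2 : μ[fun ω => δ ω * W ω | m2] =ᵐ[μ] fun _ => (1:ℝ) := by
    have htower := condExp_condExp_of_le (μ := μ) (f := fun ω => δ ω * W ω) hm23 hm3
    have := condExp_congr_ae (μ := μ) (m := m2) h1
    rw [condExp_const (hm23.trans hm3) (1:ℝ)] at this
    exact htower.symm.trans this
  filter_upwards [h2, hpos] with ω h2ω hposω
  rw [h2ω]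
  have hne : (μ[δ | m2]) ω ≠ 0 := ne_of_gt hposω
  field_simp
end

section
/- Let W > 1 a.s. with E[W | X] < ∞, and let ε be a random variable with E[ε | X] = 0, E[W ε² | X] > 0 a.s., and E[W ε² | X] < ∞. Then almost surely (E[Wε | X])² / E[Wε² | X] ≤ E[W−1 | X], with strict inequality whenever E[W−1 | X] > 0 and P(ε ≠ 0 | X) > 0; consequently E[W−1 | X] − (E[Wε | X])²/E[Wε² | X] ≥ 0. -/
open MeasureTheory

set_option maxHeartbeats 1000000

/-- Conditional Cauchy–Schwarz bound: with `W > 1` a.s. and `E[ε | X] = 0`,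
`(E[Wε | X])² / E[Wε² | X] ≤ E[W−1 | X]` a.s., strictly whenever `E[W−1 | X] > 0`
and `P(ε ≠ 0 | X) > 0`; consequently `E[W−1 | X] − (E[Wε | X])²/E[Wε² | X] ≥ 0`. -/
theorem conditional_cauchy_schwarz_weight_bound
    {Ω : Type*} [m0 : MeasurableSpace Ω] (μ : Measure Ω) [IsProbabilityMeasure μ]
    (m : MeasurableSpace Ω) (hm : m ≤ m0)
    (W ε : Ω → ℝ)
    (hW : ∀ᵐ ω ∂μ, 1 < W ω)
    (hWint : Integrable W μ)
    (hεcond : μ[ε | m] =ᵐ[μ] 0)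
    (hWε : Integrable (fun ω => W ω * ε ω) μ)
    (hWε2 : Integrable (fun ω => W ω * ε ω ^ 2) μ)
    (hpos : ∀ᵐ ω ∂μ, 0 < (μ[fun ω => W ω * ε ω ^ 2 | m]) ω) :
    ∀ᵐ ω ∂μ,
      ((μ[fun ω => W ω * ε ω | m]) ω) ^ 2 / (μ[fun ω => W ω * ε ω ^ 2 | m]) ω
          ≤ (μ[fun ω => W ω - 1 | m]) ω
      ∧ ((0 < (μ[fun ω => W ω - 1 | m]) ω
            ∧ 0 < (μ[fun ω => if ε ω ≠ 0 then (1 : ℝ) else 0 | m]) ω) →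
          ((μ[fun ω => W ω * ε ω | m]) ω) ^ 2 / (μ[fun ω => W ω * ε ω ^ 2 | m]) ω
            < (μ[fun ω => W ω - 1 | m]) ω)
      ∧ 0 ≤ (μ[fun ω => W ω - 1 | m]) ω
          - ((μ[fun ω => W ω * ε ω | m]) ω) ^ 2 / (μ[fun ω => W ω * ε ω ^ 2 | m]) ω := by
  -- measurability of ε
  have hWaesm : AEStronglyMeasurable[m0] W μ := hWint.aestronglyMeasurable
  have hεaesm : AEStronglyMeasurable[m0] ε μ := by
    refine ((hWε.aemeasurable.div hWint.aemeasurable).aestronglyMeasurable).congr ?_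
    filter_upwards [hW] with ω hω
    have h0 : W ω ≠ 0 := by linarith
    show W ω * ε ω / W ω = ε ω
    exact mul_div_cancel_left₀ _ h0
  -- integrability facts
  have hε2aesm : AEStronglyMeasurable[m0] (fun ω => ε ω ^ 2) μ := by
    have := hεaesm.mul hεaesm
    refine this.congr ?_
    filter_upwards with ω
    simp [Pi.mul_apply, sq]
  have hε2int : Integrable (fun ω => ε ω ^ 2) μ := by
    refine hWε2.mono hε2aesm ?_
    filter_upwards [hW] with ω hω
    have h1 : (0:ℝ) ≤ ε ω ^ 2 := sq_nonneg _
    rw [Real.norm_eq_abs, Real.norm_eq_abs, abs_of_nonneg h1, abs_of_nonneg (by nlinarith)]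
    nlinarith
  have hεint : Integrable ε μ := by
    refine Integrable.mono' (hWint.add hWε2) hεaesm ?_
    filter_upwards [hW] with ω hω
    have h1 : ε ω ^ 2 = |ε ω| ^ 2 := (sq_abs _).symm
    have h2 : (0:ℝ) ≤ |ε ω| := abs_nonneg _
    rw [Real.norm_eq_abs]
    simp only [Pi.add_apply]
    nlinarith [sq_nonneg (|ε ω| - 1), sq_nonneg (ε ω)]
  have hW1int : Integrable (fun ω => W ω - 1) μ := hWint.sub (integrable_const 1)
  have hW1εint : Integrable (fun ω => (W ω - 1) * ε ω) μ := by
    have : (fun ω => (W ω - 1) * ε ω) = fun ω => W ω * ε ω - ε ω := by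
      funext ω; ring
    rw [this]; exact hWε.sub hεint
  have hW1ε2int : Integrable (fun ω => (W ω - 1) * ε ω ^ 2) μ := by
    have : (fun ω => (W ω - 1) * ε ω ^ 2) = fun ω => W ω * ε ω ^ 2 - ε ω ^ 2 := by
      funext ω; ring
    rw [this]; exact hWε2.sub hε2int
  -- notation
  set A := μ[fun ω => W ω - 1 | m] with hA
  set B := μ[fun ω => W ω * ε ω | m] with hB
  set D := μ[fun ω => W ω * ε ω ^ 2 | m] with hD
  set E2 := μ[fun ω => ε ω ^ 2 | m] with hE2
  set B' := μ[fun ω => (W ω - 1) * ε ω | m] with hB'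
  set C' := μ[fun ω => (W ω - 1) * ε ω ^ 2 | m] with hC'
  set G := μ[fun ω => if ε ω ≠ 0 then (1 : ℝ) else 0 | m] with hG
  -- B' = B a.e.
  have hBeq : B' =ᵐ[μ] B := by
    have h1 : (fun ω => (W ω - 1) * ε ω) = (fun ω => W ω * ε ω) - ε := by
      funext ω; simp [Pi.sub_apply]; ring
    rw [hB', h1]
    filter_upwards [condExp_sub (m := m) hWε hεint, hεcond] with ω h2 h3
    rw [h2]
    simp only [Pi.sub_apply]
    rw [h3]
    simp [hB]
  -- C' = D - E2 a.e.
  have hCeq : C' =ᵐ[μ] fun ω => D ω - E2 ω := by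
    have h1 : (fun ω => (W ω - 1) * ε ω ^ 2)
        = (fun ω => W ω * ε ω ^ 2) - fun ω => ε ω ^ 2 := by
      funext ω; simp [Pi.sub_apply]; ring
    rw [hC', h1]
    filter_upwards [condExp_sub (m := m) hWε2 hε2int] with ω h2
    rw [h2]; simp [hD, hE2]
  -- nonnegativity of conditional expectations
  have hA0 : 0 ≤ᵐ[μ] A := condExp_nonneg (by filter_upwards [hW] with ω hω; simp; linarith)
  have hE20 : 0 ≤ᵐ[μ] E2 := condExp_nonneg (by filter_upwards with ω; positivity)
  -- quadratic inequality at rational points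
  have hqineq : ∀ q : ℚ, ∀ᵐ ω ∂μ,
      0 ≤ A ω * ((q:ℝ) * q) + (2 * B' ω) * q + C' ω := by
    intro q
    set F := fun ω => (W ω - 1) * ((q:ℝ) + ε ω) ^ 2 with hF
    have hFeq : F = ((q:ℝ)^2 • fun ω => W ω - 1)
        + ((2*(q:ℝ)) • fun ω => (W ω - 1) * ε ω) + fun ω => (W ω - 1) * ε ω ^ 2 := by
      funext ω
      simp only [Pi.add_apply, Pi.smul_apply, smul_eq_mul, hF]
      ring
    have hFnn : 0 ≤ᵐ[μ] μ[F | m] := by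
      refine condExp_nonneg ?_
      filter_upwards [hW] with ω hω
      simp only [Pi.zero_apply, hF]
      have : (0:ℝ) ≤ W ω - 1 := by linarith
      positivity
    have hlin : μ[F | m] =ᵐ[μ]
        ((q:ℝ)^2 • A) + ((2*(q:ℝ)) • B') + C' := by
      rw [hFeq]
      have hint1 : Integrable ((q:ℝ)^2 • fun ω => W ω - 1) μ := hW1int.smul _
      have hint2 : Integrable ((2*(q:ℝ)) • fun ω => (W ω - 1) * ε ω) μ := hW1εint.smul _
      refine (condExp_add (m := m) (hint1.add hint2) hW1ε2int).trans ?_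
      have h1 := condExp_add (m := m) hint1 hint2
      have h2 := condExp_smul (m := m) (μ := μ) ((q:ℝ)^2) (fun ω => W ω - 1)
      have h3 := condExp_smul (m := m) (μ := μ) (2*(q:ℝ)) (fun ω => (W ω - 1) * ε ω)
      filter_upwards [h1, h2, h3] with ω e1 e2 e3
      simp only [Pi.add_apply]
      rw [e1]
      simp only [Pi.add_apply, e2, e3]
      rfl
    filter_upwards [hFnn, hlin] with ω h1 h2
    rw [h2] at h1
    simp only [Pi.add_apply, Pi.smul_apply, smul_eq_mul, Pi.zero_apply] at h1
    nlinarith [h1]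
  -- Cauchy–Schwarz: B'^2 ≤ A * C'
  have hCS : ∀ᵐ ω ∂μ, B' ω ^ 2 ≤ A ω * C' ω := by
    have hall := (ae_all_iff).2 hqineq
    filter_upwards [hall] with ω hω
    have hallx : ∀ x : ℝ, 0 ≤ A ω * (x * x) + (2 * B' ω) * x + C' ω := by
      intro x
      have hc : Continuous fun x : ℝ => A ω * (x * x) + (2 * B' ω) * x + C' ω := by
        continuity
      have hclosed : IsClosed {x : ℝ | 0 ≤ A ω * (x * x) + (2 * B' ω) * x + C' ω} :=
        isClosed_le continuous_const hc
      have hdense : Dense (Set.range ((↑) : ℚ → ℝ)) := Rat.denseRange_cast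
      have hsub : Set.range ((↑) : ℚ → ℝ)
          ⊆ {x : ℝ | 0 ≤ A ω * (x * x) + (2 * B' ω) * x + C' ω} := by
        rintro _ ⟨q, rfl⟩; exact hω q
      have hx : x ∈ closure (Set.range ((↑) : ℚ → ℝ)) := by
        rw [hdense.closure_eq]; trivial
      exact hclosed.closure_subset (closure_mono hsub hx)
    have hdisc := discrim_le_zero hallx
    rw [discrim] at hdisc
    nlinarith [hdisc]
  -- indicator function g
  set g := fun ω => if ε ω ≠ 0 then (1 : ℝ) else 0 with hg
  have hgaesm : AEStronglyMeasurable[m0] g μ := by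
    obtain ⟨ε', hε'm, hε'eq⟩ := hεaesm
    refine ⟨fun ω => if ε' ω ≠ 0 then (1:ℝ) else 0, ?_, ?_⟩
    · have h0 : MeasurableSet[m0] {ω | ε' ω ≠ 0} :=
        (hε'm.measurable (measurableSet_singleton (0:ℝ))).compl
      have hmeas : Measurable[m0] (fun ω => if ε' ω ≠ 0 then (1:ℝ) else 0) :=
        Measurable.ite h0 measurable_const measurable_const
      exact hmeas.stronglyMeasurable
    · filter_upwards [hε'eq] with ω hω
      simp only [hg, hω]
  have hgint : Integrable g μ := by
    refine Integrable.mono' (integrable_const (1:ℝ)) hgaesm ?_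
    filter_upwards with ω
    by_cases h : ε ω = 0 <;> simp [hg, h]
  have hG0 : 0 ≤ᵐ[μ] G :=
    condExp_nonneg (by filter_upwards with ω; by_cases h : ε ω = 0 <;> simp [hg, h])
  -- on the set where E2 ≤ 0, we have G = 0 a.e.
  set S := E2 ⁻¹' (Set.Iic 0) with hS
  have hmE2 : Measurable[m] E2 :=
    (stronglyMeasurable_condExp (m := m) (f := fun ω => ε ω ^ 2)).measurable
  have hSm : MeasurableSet[m] S := hmE2 measurableSet_Iic
  have hSm0 : MeasurableSet[m0] S := hm _ hSm
  have hε2zero : (fun ω => ε ω ^ 2) =ᵐ[μ.restrict S] 0 := by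
    have h1 : ∫ ω in S, ε ω ^ 2 ∂μ = ∫ ω in S, E2 ω ∂μ :=
      (setIntegral_condExp hm hε2int hSm).symm
    have h2 : ∫ ω in S, E2 ω ∂μ ≤ 0 := by
      have hle : ∀ᵐ ω ∂μ.restrict S, E2 ω ≤ 0 :=
        (ae_restrict_iff' hSm0).2 (Filter.Eventually.of_forall fun ω hω => hω)
      exact integral_nonpos_of_ae hle
    have h3 : (0:ℝ) ≤ ∫ ω in S, ε ω ^ 2 ∂μ :=
      integral_nonneg (fun ω => sq_nonneg _)
    have h4 : ∫ ω in S, ε ω ^ 2 ∂μ = 0 := le_antisymm (h1 ▸ h2) h3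
    exact (integral_eq_zero_iff_of_nonneg_ae
      (Filter.Eventually.of_forall fun ω => sq_nonneg _) hε2int.restrict).1 h4
  have hGzeroS : G =ᵐ[μ.restrict S] 0 := by
    have hgzero : g =ᵐ[μ.restrict S] 0 := by
      filter_upwards [hε2zero] with ω hω
      have h0 : ε ω ^ 2 = 0 := by simpa using hω
      have : ε ω = 0 := by
        have := sq_nonneg (ε ω)
        nlinarith
      simp [hg, this]
    have h1 : ∫ ω in S, G ω ∂μ = ∫ ω in S, g ω ∂μ :=
      setIntegral_condExp hm hgint hSm
    have h2 : ∫ ω in S, g ω ∂μ = 0 := by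
      rw [integral_congr_ae hgzero]; simp
    refine (integral_eq_zero_iff_of_nonneg_ae ?_ integrable_condExp.restrict).1
      (h1.trans h2)
    exact ae_restrict_of_ae hG0
  have hclaim : ∀ᵐ ω ∂μ, 0 < G ω → 0 < E2 ω := by
    have h1 : ∀ᵐ ω ∂μ, ω ∈ S → G ω = 0 :=
      (ae_restrict_iff' hSm0).1 hGzeroS
    filter_upwards [h1, hE20] with ω hω hE2ω hGpos
    by_contra h
    push_neg at h
    have : ω ∈ S := by simpa [hS] using h
    rw [hω this] at hGpos
    exact lt_irrefl _ hGpos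
  -- final assembly
  filter_upwards [hpos, hA0, hE20, hBeq, hCeq, hCS, hclaim] with ω hDpos hAω hE2ω hBω hCω hCSω hclaimω
  have hCval : C' ω = D ω - E2 ω := hCω
  have hmain : B ω ^ 2 ≤ A ω * D ω := by
    rw [← hBω]
    nlinarith [hCSω, hCval, mul_nonneg hAω hE2ω]
  have h1 : B ω ^ 2 / D ω ≤ A ω := by
    rw [div_le_iff₀ hDpos]
    exact hmain
  refine ⟨h1, ?_, by linarith⟩
  rintro ⟨hApos, hGpos⟩
  have hE2pos : 0 < E2 ω := hclaimω hGpos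
  have hstrict : B ω ^ 2 < A ω * D ω := by
    rw [← hBω]
    nlinarith [hCSω, hCval, mul_pos hApos hE2pos]
  rw [div_lt_iff₀ hDpos]
  exact hstrict
end

section
/- With π̄(x,y) = 1/E[W|x,y] and C*(x) = E[π̄S|x]/(E[π̄|x]−1), the function D*(x,y) = π̄·{S(x,y) − E[π̄S|x]/E[π̄|x] + (1/π̄ − 1/E[π̄|x])·C*(x)} satisfies E[D*(x,Y)|x] = 0. -/
open MeasureTheory

/-- Mean-zero property of the efficient score component `D*_eff` in Theorem 1(c),
working conditionally on `X = x` (`ν` is the conditional distribution of `Y` given `x`,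
`π̄(y) = 1/E[W|x,y] ∈ (0,1)`). With `C*(x) = E[π̄S|x]/(E[π̄|x] − 1)`, the function
`D*(y) = π̄(y)·{S(y) − E[π̄S|x]/E[π̄|x] + (1/π̄(y) − 1/E[π̄|x])·C*(x)}`
satisfies `E[D* | x] = 0`. -/
theorem outcome_model_Dstar_mean_zero
    {Θ : Type*} [MeasurableSpace Θ] (ν : Measure Θ) [IsProbabilityMeasure ν]
    (πb S : Θ → ℝ)
    (hπ : ∀ᵐ y ∂ν, πb y ∈ Set.Ioo (0:ℝ) 1)
    (hπmean : (∫ y, πb y ∂ν) ∈ Set.Ioo (0:ℝ) 1)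
    (hπint : Integrable πb ν)
    (hπSint : Integrable (fun y => πb y * S y) ν)
    (Cs : ℝ) (Ds : Θ → ℝ)
    (hCs : Cs = (∫ y, πb y * S y ∂ν) / ((∫ y, πb y ∂ν) - 1))
    (hDs : Ds = fun y => πb y * (S y - (∫ t, πb t * S t ∂ν) / (∫ t, πb t ∂ν)
        + ((πb y)⁻¹ - (∫ t, πb t ∂ν)⁻¹) * Cs))
    (hDint : Integrable Ds ν) :
    ∫ y, Ds y ∂ν = 0 := by
  set m := ∫ t, πb t ∂ν with hm
  set A := (∫ t, πb t * S t ∂ν) / m with hA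
  have hm0 : m ≠ 0 := ne_of_gt hπmean.1
  have hcongr : Ds =ᵐ[ν] fun y =>
      (πb y * S y - πb y * A) + (1 - πb y * m⁻¹) * Cs := by
    filter_upwards [hπ] with y hy
    have hy0 : πb y ≠ 0 := ne_of_gt hy.1
    rw [hDs]
    field_simp
  rw [integral_congr_ae hcongr]
  have h1 : Integrable (fun y => πb y * S y - πb y * A) ν :=
    hπSint.sub (hπint.mul_const A)
  have h2 : Integrable (fun y => (1 - πb y * m⁻¹) * Cs) ν := by
    exact (((integrable_const (1:ℝ)).sub (hπint.mul_const m⁻¹)).mul_const Cs)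
  rw [integral_add h1 h2, integral_sub hπSint (hπint.mul_const A),
      integral_mul_const, integral_mul_const,
      integral_sub (integrable_const 1) (hπint.mul_const m⁻¹),
      integral_mul_const, integral_const]
  simp only [measure_univ, probReal_univ, ENNReal.toReal_one, smul_eq_mul, one_mul, ← hm]
  rw [hA]
  field_simp
  ring
end

section
/- In the linear regression / mean model setting, the projection of any h ∈ H onto Λ^{F} = orthogonal complement of Λ^{F,⊥} where Λ^{F,⊥} = {A(X)ε : A measurable, E[A(X)²ε²]<∞}, satisfies Π(h | Λ^{F,⊥}) = (E[hε | X]/V(X))·ε, where ε = Y − μ(X;θ), E[ε|X]=0 and V(X) = E[ε²|X] > 0 a.s. -/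
open MeasureTheory

private lemma integrable_mul_of_memL2 {Ω : Type*} {mΩ : MeasurableSpace Ω} {μ : Measure Ω}
    {f g : Ω → ℝ} (hf : MemLp f 2 μ) (hg : MemLp g 2 μ) :
    Integrable (fun ω => f ω * g ω) μ := by
  have h := L2.integrable_inner (𝕜 := ℝ) (hf.toLp f) (hg.toLp g)
  refine h.congr ?_
  filter_upwards [hf.coeFn_toLp, hg.coeFn_toLp] with ω h1 h2
  simp [h1, h2, RCLike.inner_apply, mul_comm]

/-- Projection onto `Λ^{F,⊥} = {A(X)·ε}` in the conditional-mean model: with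
`ε = Y − μ(X;θ)`, `E[ε | X] = 0`, `V(X) = E[ε² | X] > 0` a.s., the residual
`h − (E[hε | X]/V(X))·ε` is orthogonal to every `A(X)·ε` with `A` being
`σ(X)`-measurable and `A·ε` square-integrable; i.e.
`Π(h | Λ^{F,⊥}) = (E[hε | X]/V(X))·ε`. -/
theorem projection_onto_Aeps
    {Ω : Type*} [m0 : MeasurableSpace Ω] (μ : Measure Ω) [IsProbabilityMeasure μ]
    (m : MeasurableSpace Ω) (hm : m ≤ m0)
    (h ε : Ω → ℝ)
    (hh : MemLp h 2 μ) (hε : MemLp ε 2 μ)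
    (hεcond : μ[ε | m] =ᵐ[μ] 0)
    (hVpos : ∀ᵐ ω ∂μ, 0 < (μ[fun ω => ε ω ^ 2 | m]) ω) :
    ∀ A : Ω → ℝ, Measurable[m] A → MemLp (fun ω => A ω * ε ω) 2 μ →
      Integrable (fun ω =>
        (h ω - (μ[fun ω => h ω * ε ω | m]) ω / (μ[fun ω => ε ω ^ 2 | m]) ω * ε ω)
          * (A ω * ε ω)) μ →
      ∫ ω, (h ω - (μ[fun ω => h ω * ε ω | m]) ω / (μ[fun ω => ε ω ^ 2 | m]) ω * ε ω)
          * (A ω * ε ω) ∂μ = 0 := by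
  intro A hA hAε hInt
  set g : Ω → ℝ := μ[fun ω => h ω * ε ω | m] with hg_def
  set V : Ω → ℝ := μ[fun ω => ε ω ^ 2 | m] with hV_def
  haveI : SigmaFinite (μ.trim hm) := by
    have : IsFiniteMeasure (μ.trim hm) := isFiniteMeasure_trim hm
    infer_instance
  -- basic integrability facts
  have h1 : Integrable (fun ω => h ω * (A ω * ε ω)) μ := integrable_mul_of_memL2 (μ := μ) hh hAε
  have hhε_int : Integrable (fun ω => h ω * ε ω) μ := integrable_mul_of_memL2 (μ := μ) hh hε
  have hεsq_int : Integrable (fun ω => ε ω ^ 2) μ := by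
    have := integrable_mul_of_memL2 (μ := μ) hε hε
    simpa [sq] using this
  -- the m-measurable factor B
  set B : Ω → ℝ := fun ω => g ω / V ω * A ω with hB_def
  have hg_m : StronglyMeasurable[m] g := stronglyMeasurable_condExp
  have hV_m : StronglyMeasurable[m] V := stronglyMeasurable_condExp
  have hB_meas : StronglyMeasurable[m] B := by
    have h1m : Measurable[m] fun ω => g ω / V ω * A ω :=
      (hg_m.measurable.div hV_m.measurable).mul hA
    exact h1m.stronglyMeasurable
  have hB_int : Integrable (fun ω => B ω * ε ω ^ 2) μ := by
    have := h1.sub hInt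
    refine this.congr (ae_of_all _ fun ω => ?_)
    simp only [Pi.sub_apply, hB_def]
    ring
  -- Step 1: ∫ h·(Aε) = ∫ A·g
  have step1 : ∫ ω, h ω * (A ω * ε ω) ∂μ = ∫ ω, A ω * g ω ∂μ := by
    have hAhε_int : Integrable (A * fun ω => h ω * ε ω) μ := by
      refine h1.congr (ae_of_all _ fun ω => ?_)
      simp [Pi.mul_apply]; ring
    have hc := condExp_mul_of_stronglyMeasurable_left (μ := μ) hA.stronglyMeasurable
      hAhε_int hhε_int
    calc ∫ ω, h ω * (A ω * ε ω) ∂μ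
        = ∫ ω, (A * fun ω => h ω * ε ω) ω ∂μ := by
          refine integral_congr_ae (ae_of_all _ fun ω => ?_)
          simp [Pi.mul_apply]; ring
      _ = ∫ ω, (μ[A * fun ω => h ω * ε ω | m]) ω ∂μ := (integral_condExp hm).symm
      _ = ∫ ω, A ω * g ω ∂μ := by
          refine integral_congr_ae (hc.mono fun ω hω => ?_)
          simpa [Pi.mul_apply, hg_def] using hω
  -- Step 2: ∫ B·ε² = ∫ A·g
  have step2 : ∫ ω, B ω * ε ω ^ 2 ∂μ = ∫ ω, A ω * g ω ∂μ := by
    have hBε_int : Integrable (B * fun ω => ε ω ^ 2) μ := by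
      refine hB_int.congr (ae_of_all _ fun ω => ?_)
      simp [Pi.mul_apply]
    have hc := condExp_mul_of_stronglyMeasurable_left (μ := μ) hB_meas hBε_int hεsq_int
    calc ∫ ω, B ω * ε ω ^ 2 ∂μ
        = ∫ ω, (B * fun ω => ε ω ^ 2) ω ∂μ := by
          refine integral_congr_ae (ae_of_all _ fun ω => ?_)
          simp [Pi.mul_apply]
      _ = ∫ ω, (μ[B * fun ω => ε ω ^ 2 | m]) ω ∂μ := (integral_condExp hm).symm
      _ = ∫ ω, A ω * g ω ∂μ := by
          refine integral_congr_ae ((hc.and hVpos).mono fun ω hω => ?_)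
          obtain ⟨hω1, hω2⟩ := hω
          rw [hω1]
          simp only [Pi.mul_apply, hB_def, hV_def]
          have hω2' : (μ[fun ω => ε ω ^ 2 | m]) ω ≠ 0 := hω2.ne'
          field_simp
  -- conclude
  have : ∫ ω, (h ω - g ω / V ω * ε ω) * (A ω * ε ω) ∂μ
      = ∫ ω, h ω * (A ω * ε ω) ∂μ - ∫ ω, B ω * ε ω ^ 2 ∂μ := by
    rw [← integral_sub h1 hB_int]
    refine integral_congr_ae (ae_of_all _ fun ω => ?_)
    simp only [hB_def]
    ring
  rw [show (∫ ω, (h ω - (μ[fun ω => h ω * ε ω | m]) ω / (μ[fun ω => ε ω ^ 2 | m]) ω * ε ω)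
      * (A ω * ε ω) ∂μ) = ∫ ω, (h ω - g ω / V ω * ε ω) * (A ω * ε ω) ∂μ from rfl,
    this, step1, step2, sub_self]
end

section
/- Under informative sampling with P(δ=1|X,Y,W) = W⁻¹ and E[W−1] > 0, the estimator θ̂ = N⁻¹ Σᵢ { δᵢWᵢYᵢ + (1−δᵢWᵢ)·c } with c = E[(W−1)Y]/E[W−1] is unbiased for θ = E[Y], and for any constant c' the variance of a single summand δWY + (1−δW)c' is minimized over c' at c' = c. -/
open MeasureTheory Filter Topology ENNReal NNReal

lemma pi_map_eval' {ι : Type*} [Fintype ι] {α : ι → Type*} [∀ i, MeasurableSpace (α i)]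
    (μ : ∀ i, Measure (α i)) [∀ i, IsProbabilityMeasure (μ i)] (i : ι) :
    (Measure.pi μ).map (Function.eval i) = μ i := by
  classical
  ext s hs
  rw [Measure.map_apply (measurable_pi_apply i) hs, Set.eval_preimage, Measure.pi_pi]
  rw [Finset.prod_eq_single i]
  · simp
  · intro j _ hj; simp [Function.update_of_ne hj]
  · simp

lemma key_lemma {Ω : Type*} [m0 : MeasurableSpace Ω] (μ : Measure Ω) [IsProbabilityMeasure μ]
    (W δ : Ω → ℝ) (hWm : Measurable W) (hδm : Measurable δ)
    (hδ01 : ∀ ω, δ ω = 0 ∨ δ ω = 1)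
    (hW : ∀ᵐ ω ∂μ, 1 < W ω)
    {G : MeasurableSpace Ω} (hG : G ≤ m0)
    (hcond : μ[δ|G] =ᵐ[μ] fun ω => (W ω)⁻¹)
    (g : Ω → ℝ) (hg : Measurable[G] g)
    (hgi : Integrable (fun ω => (W ω)⁻¹ * |g ω|) μ) :
    Integrable (fun ω => δ ω * g ω) μ ∧
      ∫ ω, δ ω * g ω ∂μ = ∫ ω, (W ω)⁻¹ * g ω ∂μ := by
  have hδ0 : ∀ ω, 0 ≤ δ ω := fun ω => by rcases hδ01 ω with h | h <;> simp [h]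
  have hδ1 : ∀ ω, δ ω ≤ 1 := fun ω => by rcases hδ01 ω with h | h <;> simp [h]
  have hgm : Measurable[m0] g := hg.mono hG le_rfl
  have hWpos : ∀ᵐ ω ∂μ, 0 < W ω := hW.mono fun ω h => lt_trans one_pos h
  have hWinv0 : ∀ᵐ ω ∂μ, 0 ≤ (W ω)⁻¹ := hWpos.mono fun ω h => (inv_pos.2 h).le
  have hδi : Integrable δ μ := by
    refine (integrable_const (1:ℝ)).mono' hδm.aestronglyMeasurable ?_
    exact ae_of_all _ fun ω => by rw [Real.norm_eq_abs, abs_of_nonneg (hδ0 ω)]; exact hδ1 ω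
  haveI : SigmaFinite (μ.trim hG) := by infer_instance
  -- the bounded case
  have step : ∀ (f : Ω → ℝ), Measurable[G] f → ∀ (n : ℝ), (∀ ω, |f ω| ≤ n) →
      ∫ ω, δ ω * f ω ∂μ = ∫ ω, (W ω)⁻¹ * f ω ∂μ := by
    intro f hf n hb
    have h1 : μ[f * δ|G] =ᵐ[μ] f * μ[δ|G] :=
      condExp_stronglyMeasurable_mul_of_bound hG hf.stronglyMeasurable hδi n
        (ae_of_all _ fun ω => by rw [Real.norm_eq_abs]; exact hb ω)
    have h2 : ∫ ω, f ω * δ ω ∂μ = ∫ ω, (μ[f * δ|G]) ω ∂μ := (integral_condExp hG).symm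
    have h3 : ∫ ω, (μ[f * δ|G]) ω ∂μ = ∫ ω, f ω * (W ω)⁻¹ ∂μ := by
      refine integral_congr_ae (h1.trans ?_)
      filter_upwards [hcond] with ω hω
      simp only [Pi.mul_apply, hω]
    simp only [mul_comm] at h2 h3 ⊢
    rw [h2, h3]
  -- integrability of δ * g
  have hmin : ∀ n : ℕ, Measurable[G] fun ω => min (|g ω|) (n:ℝ) :=
    fun n => hg.abs.min measurable_const
  have hminm0 : ∀ n : ℕ, Measurable[m0] fun ω => min (|g ω|) (n:ℝ) :=
    fun n => (hmin n).mono hG le_rfl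
  have hmin_nn : ∀ (n : ℕ) ω, 0 ≤ min (|g ω|) (n:ℝ) :=
    fun n ω => le_min (abs_nonneg _) (Nat.cast_nonneg n)
  have hminb : ∀ (n : ℕ) ω, |min (|g ω|) (n:ℝ)| ≤ (n:ℝ) := fun n ω => by
    rw [abs_of_nonneg (hmin_nn n ω)]; exact min_le_right _ _
  have hφint : ∀ n : ℕ, Integrable (fun ω => δ ω * min (|g ω|) (n:ℝ)) μ := by
    intro n
    refine (integrable_const (n:ℝ)).mono' ((hδm.mul (hminm0 n)).aestronglyMeasurable) ?_
    refine ae_of_all _ fun ω => ?_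
    rw [Real.norm_eq_abs, abs_mul, abs_of_nonneg (hδ0 ω)]
    calc δ ω * |min (|g ω|) (n:ℝ)| ≤ 1 * (n:ℝ) :=
          mul_le_mul (hδ1 ω) (hminb n ω) (abs_nonneg _) zero_le_one
      _ = (n:ℝ) := one_mul _
  have hφval : ∀ n : ℕ, ∫ ω, δ ω * min (|g ω|) (n:ℝ) ∂μ
      = ∫ ω, (W ω)⁻¹ * min (|g ω|) (n:ℝ) ∂μ := fun n => step _ (hmin n) n (hminb n)
  have hWmin_int : ∀ n : ℕ, Integrable (fun ω => (W ω)⁻¹ * min (|g ω|) (n:ℝ)) μ := by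
    intro n
    refine hgi.mono' ((hWm.inv.mul (hminm0 n)).aestronglyMeasurable) ?_
    filter_upwards [hWinv0] with ω hω
    rw [Real.norm_eq_abs, abs_mul, abs_of_nonneg hω, abs_of_nonneg (hmin_nn n ω)]
    exact mul_le_mul_of_nonneg_left (min_le_left _ _) hω
  have hle : ∀ n : ℕ, ∫ ω, (W ω)⁻¹ * min (|g ω|) (n:ℝ) ∂μ ≤ ∫ ω, (W ω)⁻¹ * |g ω| ∂μ := by
    intro n
    refine integral_mono_ae (hWmin_int n) hgi ?_
    filter_upwards [hWinv0] with ω hω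
    exact mul_le_mul_of_nonneg_left (min_le_left _ _) hω
  have hlim : Tendsto (fun n : ℕ => ∫⁻ ω, ENNReal.ofReal (δ ω * min (|g ω|) (n:ℝ)) ∂μ) atTop
      (𝓝 (∫⁻ ω, ENNReal.ofReal (δ ω * |g ω|) ∂μ)) := by
    refine lintegral_tendsto_of_tendsto_of_monotone
      (fun n => (ENNReal.measurable_ofReal.comp (hδm.mul (hminm0 n))).aemeasurable) ?_ ?_
    · refine ae_of_all _ fun ω a b hab => ?_
      refine ENNReal.ofReal_le_ofReal ?_
      exact mul_le_mul_of_nonneg_left (min_le_min le_rfl (Nat.cast_le.2 hab)) (hδ0 ω)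
    · refine ae_of_all _ fun ω => ?_
      refine tendsto_atTop_of_eventually_const (i₀ := ⌈|g ω|⌉₊) fun n hn => ?_
      congr 1
      rw [min_eq_left ((Nat.le_ceil _).trans (Nat.cast_le.2 hn))]
  have hbound : ∫⁻ ω, ENNReal.ofReal (δ ω * |g ω|) ∂μ
      ≤ ENNReal.ofReal (∫ ω, (W ω)⁻¹ * |g ω| ∂μ) := by
    refine le_of_tendsto hlim (Eventually.of_forall fun n => ?_)
    rw [← ofReal_integral_eq_lintegral_ofReal (hφint n)
      (ae_of_all _ fun ω => mul_nonneg (hδ0 ω) (hmin_nn n ω)), hφval n]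
    exact ENNReal.ofReal_le_ofReal (hle n)
  have hint : Integrable (fun ω => δ ω * g ω) μ := by
    refine ⟨(hδm.mul hgm).aestronglyMeasurable, ?_⟩
    have : (∫⁻ ω, (‖δ ω * g ω‖₊ : ℝ≥0∞) ∂μ) = ∫⁻ ω, ENNReal.ofReal (δ ω * |g ω|) ∂μ := by
      refine lintegral_congr fun ω => ?_
      rw [← enorm_eq_nnnorm, Real.enorm_eq_ofReal_abs, abs_mul, abs_of_nonneg (hδ0 ω)]
    show (∫⁻ ω, (‖δ ω * g ω‖₊ : ℝ≥0∞) ∂μ) < ⊤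
    rw [this]
    exact lt_of_le_of_lt hbound ENNReal.ofReal_lt_top
  refine ⟨hint, ?_⟩
  -- value via dominated convergence with clamping
  let cl : ℕ → Ω → ℝ := fun n ω => max (-(n:ℝ)) (min (g ω) (n:ℝ))
  have hclmG : ∀ n : ℕ, Measurable[G] (cl n) :=
    fun n => measurable_const.max (hg.min measurable_const)
  have hclm : ∀ n : ℕ, Measurable[m0] (cl n) :=
    fun n => (hclmG n).mono hG le_rfl
  have hclb : ∀ (n : ℕ) ω, |cl n ω| ≤ (n:ℝ) := by
    intro n ω
    rw [abs_le]
    refine ⟨le_max_left _ _, max_le (by linarith [Nat.cast_nonneg (α := ℝ) n]) (min_le_right _ _)⟩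
  have hclabs : ∀ (n : ℕ) ω, |cl n ω| ≤ |g ω| := by
    intro n ω
    rw [abs_le]
    constructor
    · refine le_max_of_le_right (le_min (neg_abs_le _) ?_)
      calc -|g ω| ≤ 0 := neg_nonpos.2 (abs_nonneg _)
        _ ≤ (n:ℝ) := Nat.cast_nonneg n
    · refine max_le ?_ ((min_le_left _ _).trans (le_abs_self _))
      calc -(n:ℝ) ≤ 0 := neg_nonpos.2 (Nat.cast_nonneg n)
        _ ≤ |g ω| := abs_nonneg _
  have hcl_tendsto : ∀ ω, Tendsto (fun n : ℕ => cl n ω) atTop (𝓝 (g ω)) := by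
    intro ω
    refine tendsto_atTop_of_eventually_const (i₀ := ⌈|g ω|⌉₊) fun n hn => ?_
    have hgn : |g ω| ≤ (n:ℝ) := (Nat.le_ceil _).trans (Nat.cast_le.2 hn)
    have h1 : min (g ω) (n:ℝ) = g ω := min_eq_left ((le_abs_self _).trans hgn)
    have h2 : -(n:ℝ) ≤ g ω := by
      have := neg_abs_le (g ω); linarith
    show max (-(n:ℝ)) (min (g ω) (n:ℝ)) = g ω
    rw [h1, max_eq_right h2]
  have hclval : ∀ n : ℕ, ∫ ω, δ ω * cl n ω ∂μ = ∫ ω, (W ω)⁻¹ * cl n ω ∂μ :=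
    fun n => step _ (hclmG n) n (hclb n)
  have habs_int : Integrable (fun ω => |δ ω * g ω|) μ := hint.abs
  have hDCT1 : Tendsto (fun n : ℕ => ∫ ω, δ ω * cl n ω ∂μ) atTop (𝓝 (∫ ω, δ ω * g ω ∂μ)) := by
    refine tendsto_integral_of_dominated_convergence _
      (fun n => (hδm.mul (hclm n)).aestronglyMeasurable) habs_int ?_ ?_
    · intro n
      refine ae_of_all _ fun ω => ?_
      rw [Real.norm_eq_abs, abs_mul, abs_mul]
      exact mul_le_mul_of_nonneg_left (hclabs n ω) (abs_nonneg _)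
    · exact ae_of_all _ fun ω => (hcl_tendsto ω).const_mul _
  have hDCT2 : Tendsto (fun n : ℕ => ∫ ω, (W ω)⁻¹ * cl n ω ∂μ) atTop
      (𝓝 (∫ ω, (W ω)⁻¹ * g ω ∂μ)) := by
    refine tendsto_integral_of_dominated_convergence _
      (fun n => (hWm.inv.mul (hclm n)).aestronglyMeasurable) hgi ?_ ?_
    · intro n
      filter_upwards [hWinv0] with ω hω
      rw [Real.norm_eq_abs, abs_mul, abs_of_nonneg hω]
      exact mul_le_mul_of_nonneg_left (hclabs n ω) hω
    · exact ae_of_all _ fun ω => (hcl_tendsto ω).const_mul _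
  have := hDCT2
  rw [show (fun n : ℕ => ∫ ω, (W ω)⁻¹ * cl n ω ∂μ) = fun n : ℕ => ∫ ω, δ ω * cl n ω ∂μ
    from funext fun n => (hclval n).symm] at this
  exact tendsto_nhds_unique hDCT1 this


/-- Optimal augmented estimator for the mean: with `P(δ=1|X,Y,W) = W⁻¹`, `W > 1` a.s.,
`E[W−1] > 0` and `c = E[(W−1)Y]/E[W−1]`, the estimator
`θ̂ = N⁻¹ Σᵢ {δᵢWᵢYᵢ + (1−δᵢWᵢ)c}` over i.i.d. copies is unbiased for `θ = E[Y]`, and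
for any constant `c'` the variance of a single summand `δWY + (1−δW)c'` is minimized
at `c' = c`. -/
theorem optimal_mean_estimator
    {Ω : Type*} [m0 : MeasurableSpace Ω] (μ : Measure Ω) [IsProbabilityMeasure μ]
    (X Y W δ : Ω → ℝ)
    (hX : Measurable X) (hY : Measurable Y) (hWm : Measurable W) (hδm : Measurable δ)
    (hδ01 : ∀ ω, δ ω = 0 ∨ δ ω = 1)
    (hW : ∀ᵐ ω ∂μ, 1 < W ω)
    (hcond : μ[δ | MeasurableSpace.comap (fun ω => (X ω, Y ω, W ω)) inferInstance]
      =ᵐ[μ] fun ω => (W ω)⁻¹)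
    (hWY2 : Integrable (fun ω => W ω * Y ω ^ 2) μ)
    (hWY : Integrable (fun ω => W ω * Y ω) μ)
    (hWint : Integrable W μ)
    (hEW : 0 < ∫ ω, (W ω - 1) ∂μ)
    (c : ℝ) (hc : c = (∫ ω, (W ω - 1) * Y ω ∂μ) / (∫ ω, (W ω - 1) ∂μ))
    (N : ℕ) (hN : 0 < N) :
    (∫ x, ((N : ℝ)⁻¹ * ∑ i, (δ (x i) * W (x i) * Y (x i) + (1 - δ (x i) * W (x i)) * c))
        ∂(Measure.pi fun _ : Fin N => μ)
      = ∫ ω, Y ω ∂μ)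
    ∧ ∀ c' : ℝ,
        (∫ ω, (δ ω * W ω * Y ω + (1 - δ ω * W ω) * c) ^ 2 ∂μ)
            - (∫ ω, (δ ω * W ω * Y ω + (1 - δ ω * W ω) * c) ∂μ) ^ 2
          ≤ (∫ ω, (δ ω * W ω * Y ω + (1 - δ ω * W ω) * c') ^ 2 ∂μ)
            - (∫ ω, (δ ω * W ω * Y ω + (1 - δ ω * W ω) * c') ∂μ) ^ 2 := by
  have hφ : Measurable fun ω => (X ω, Y ω, W ω) := hX.prodMk (hY.prodMk hWm)
  have hG : MeasurableSpace.comap (fun ω => (X ω, Y ω, W ω)) inferInstance ≤ m0 :=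
    hφ.comap_le
  have hφG : Measurable[MeasurableSpace.comap (fun ω => (X ω, Y ω, W ω)) inferInstance]
      fun ω => (X ω, Y ω, W ω) := measurable_iff_comap_le.2 le_rfl
  have hYG : Measurable[MeasurableSpace.comap (fun ω => (X ω, Y ω, W ω)) inferInstance] Y :=
    measurable_fst.comp (measurable_snd.comp hφG)
  have hWG : Measurable[MeasurableSpace.comap (fun ω => (X ω, Y ω, W ω)) inferInstance] W :=
    measurable_snd.comp (measurable_snd.comp hφG)
  have hW0 : ∀ᵐ ω ∂μ, 0 < W ω := hW.mono fun ω h => lt_trans one_pos h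
  -- integrability of Y and of W * |Y|
  have hYint : Integrable Y μ := by
    refine (((integrable_const (1:ℝ)).add hWY2).div_const 2).mono' hY.aestronglyMeasurable ?_
    filter_upwards [hW] with ω hω
    rw [Real.norm_eq_abs]
    simp only [Pi.add_apply]
    nlinarith [sq_nonneg (|Y ω| - 1), sq_abs (Y ω), sq_nonneg (Y ω)]
  have hWYabs : Integrable (fun ω => W ω * |Y ω|) μ := by
    refine ((hWint.add hWY2).div_const 2).mono' (hWm.mul hY.abs).aestronglyMeasurable ?_
    filter_upwards [hW] with ω hω
    rw [Real.norm_eq_abs, abs_mul, abs_of_pos (lt_trans one_pos hω), abs_abs]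
    simp only [Pi.add_apply]
    nlinarith [mul_nonneg (by linarith : (0:ℝ) ≤ W ω) (sq_nonneg (|Y ω| - 1)), sq_abs (Y ω)]
  -- the five moment identities
  have E1 := key_lemma μ W δ hWm hδm hδ01 hW hG hcond (fun ω => W ω * Y ω) (hWG.mul hYG)
    (hYint.abs.congr (by
      filter_upwards [hW0] with ω hω
      rw [abs_mul, abs_of_pos hω, ← mul_assoc, inv_mul_cancel₀ hω.ne', one_mul]))
  have hI1 : ∫ ω, δ ω * (W ω * Y ω) ∂μ = ∫ ω, Y ω ∂μ := by
    rw [E1.2]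
    refine integral_congr_ae ?_
    filter_upwards [hW0] with ω hω
    rw [← mul_assoc, inv_mul_cancel₀ hω.ne', one_mul]
  have E2 := key_lemma μ W δ hWm hδm hδ01 hW hG hcond W hWG
    ((integrable_const (1:ℝ)).congr (by
      filter_upwards [hW0] with ω hω
      rw [abs_of_pos hω, inv_mul_cancel₀ hω.ne']))
  have hI2 : ∫ ω, δ ω * W ω ∂μ = 1 := by
    rw [E2.2]
    have : ∫ ω, (W ω)⁻¹ * W ω ∂μ = ∫ (_ : Ω), (1:ℝ) ∂μ := by
      refine integral_congr_ae ?_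
      filter_upwards [hW0] with ω hω
      rw [inv_mul_cancel₀ hω.ne']
    rw [this]; simp
  have E3 := key_lemma μ W δ hWm hδm hδ01 hW hG hcond (fun ω => W ω * (W ω * Y ω ^ 2))
    (hWG.mul (hWG.mul (hYG.pow measurable_const)))
    (hWY2.congr (by
      filter_upwards [hW0] with ω hω
      have hnn : 0 ≤ W ω * Y ω ^ 2 := mul_nonneg hω.le (sq_nonneg _)
      rw [abs_mul, abs_of_pos hω, abs_of_nonneg hnn, ← mul_assoc,
        inv_mul_cancel₀ hω.ne', one_mul]))
  have hI3 : ∫ ω, δ ω * (W ω * (W ω * Y ω ^ 2)) ∂μ = ∫ ω, W ω * Y ω ^ 2 ∂μ := by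
    rw [E3.2]
    refine integral_congr_ae ?_
    filter_upwards [hW0] with ω hω
    rw [← mul_assoc, inv_mul_cancel₀ hω.ne', one_mul]
  have E4 := key_lemma μ W δ hWm hδm hδ01 hW hG hcond (fun ω => W ω * (W ω * Y ω))
    (hWG.mul (hWG.mul hYG))
    (hWYabs.congr (by
      filter_upwards [hW0] with ω hω
      rw [abs_mul, abs_of_pos hω, abs_mul, abs_of_pos hω, ← mul_assoc,
        inv_mul_cancel₀ hω.ne', one_mul]))
  have hI4 : ∫ ω, δ ω * (W ω * (W ω * Y ω)) ∂μ = ∫ ω, W ω * Y ω ∂μ := by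
    rw [E4.2]
    refine integral_congr_ae ?_
    filter_upwards [hW0] with ω hω
    rw [← mul_assoc, inv_mul_cancel₀ hω.ne', one_mul]
  have E5 := key_lemma μ W δ hWm hδm hδ01 hW hG hcond (fun ω => W ω * W ω) (hWG.mul hWG)
    (hWint.congr (by
      filter_upwards [hW0] with ω hω
      rw [abs_mul, abs_of_pos hω, ← mul_assoc, inv_mul_cancel₀ hω.ne', one_mul]))
  have hI5 : ∫ ω, δ ω * (W ω * W ω) ∂μ = ∫ ω, W ω ∂μ := by
    rw [E5.2]
    refine integral_congr_ae ?_
    filter_upwards [hW0] with ω hω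
    rw [← mul_assoc, inv_mul_cancel₀ hω.ne', one_mul]
  have J1 : Integrable (fun ω => δ ω * (W ω * Y ω)) μ := E1.1
  have J2 : Integrable (fun ω => δ ω * W ω) μ := E2.1
  have J3 : Integrable (fun ω => δ ω * (W ω * (W ω * Y ω ^ 2))) μ := E3.1
  have J4 : Integrable (fun ω => δ ω * (W ω * (W ω * Y ω))) μ := E4.1
  have J5 : Integrable (fun ω => δ ω * (W ω * W ω)) μ := E5.1
  -- the mean of a single summand
  have hSint : ∀ t : ℝ, Integrable (fun ω => δ ω * W ω * Y ω + (1 - δ ω * W ω) * t) μ := by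
    intro t
    refine (J1.add ((integrable_const t).sub (J2.const_mul t))).congr
      (ae_of_all _ fun ω => by simp only [Pi.add_apply, Pi.sub_apply]; ring)
  have hmean : ∀ t : ℝ, ∫ ω, (δ ω * W ω * Y ω + (1 - δ ω * W ω) * t) ∂μ = ∫ ω, Y ω ∂μ := by
    intro t
    have hrw : (fun ω => δ ω * W ω * Y ω + (1 - δ ω * W ω) * t)
        = fun ω => δ ω * (W ω * Y ω) + (t - t * (δ ω * W ω)) := funext fun ω => by ring
    have kt : Integrable (fun ω => t * (δ ω * W ω)) μ := J2.const_mul t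
    have ht : Integrable (fun ω => t - t * (δ ω * W ω)) μ := (integrable_const t).sub kt
    rw [hrw, integral_add J1 ht, integral_sub (integrable_const t) kt,
      integral_const_mul, hI1, hI2]
    simp
  -- the second moment of a single summand
  have hsq : ∀ t : ℝ, ∫ ω, (δ ω * W ω * Y ω + (1 - δ ω * W ω) * t) ^ 2 ∂μ
      = (∫ ω, W ω * Y ω ^ 2 ∂μ) + 2 * t * (∫ ω, Y ω ∂μ) - 2 * t * (∫ ω, W ω * Y ω ∂μ)
        + (t ^ 2 - 2 * t ^ 2 + t ^ 2 * (∫ ω, W ω ∂μ)) := by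
    intro t
    have hrw : (fun ω => (δ ω * W ω * Y ω + (1 - δ ω * W ω) * t) ^ 2)
        = fun ω => ((δ ω * (W ω * (W ω * Y ω ^ 2)) + (2 * t) * (δ ω * (W ω * Y ω)))
            - (2 * t) * (δ ω * (W ω * (W ω * Y ω))))
          + ((t ^ 2 - (2 * t ^ 2) * (δ ω * W ω)) + t ^ 2 * (δ ω * (W ω * W ω))) := by
      funext ω
      rcases hδ01 ω with h | h <;> rw [h] <;> ring
    have k1 : Integrable (fun ω => (2 * t) * (δ ω * (W ω * Y ω))) μ := J1.const_mul _
    have k4 : Integrable (fun ω => (2 * t) * (δ ω * (W ω * (W ω * Y ω)))) μ := J4.const_mul _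
    have k2 : Integrable (fun ω => (2 * t ^ 2) * (δ ω * W ω)) μ := J2.const_mul _
    have k5 : Integrable (fun ω => t ^ 2 * (δ ω * (W ω * W ω))) μ := J5.const_mul _
    have i12 : Integrable (fun ω => δ ω * (W ω * (W ω * Y ω ^ 2))
        + (2 * t) * (δ ω * (W ω * Y ω))) μ := J3.add k1
    have i123 : Integrable (fun ω => (δ ω * (W ω * (W ω * Y ω ^ 2))
        + (2 * t) * (δ ω * (W ω * Y ω))) - (2 * t) * (δ ω * (W ω * (W ω * Y ω)))) μ :=
      i12.sub k4
    have i45 : Integrable (fun ω => t ^ 2 - (2 * t ^ 2) * (δ ω * W ω)) μ :=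
      (integrable_const _).sub k2
    have i456 : Integrable (fun ω => (t ^ 2 - (2 * t ^ 2) * (δ ω * W ω))
        + t ^ 2 * (δ ω * (W ω * W ω))) μ := i45.add k5
    rw [hrw, integral_add i123 i456, integral_sub i12 k4,
      integral_add J3 k1, integral_add i45 k5,
      integral_sub (integrable_const (t ^ 2)) k2,
      integral_const_mul, integral_const_mul, integral_const_mul, integral_const_mul,
      hI1, hI2, hI3, hI4, hI5]
    simp only [integral_const, measure_univ, probReal_univ, ENNReal.toReal_one, smul_eq_mul, one_mul,
      mul_one]
  -- algebraic facts
  have hB : ∫ ω, (W ω - 1) ∂μ = (∫ ω, W ω ∂μ) - 1 := by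
    rw [integral_sub hWint (integrable_const 1)]; simp
  have hA : ∫ ω, (W ω - 1) * Y ω ∂μ = (∫ ω, W ω * Y ω ∂μ) - ∫ ω, Y ω ∂μ := by
    have hrw : (fun ω => (W ω - 1) * Y ω) = fun ω => W ω * Y ω - Y ω := funext fun ω => by ring
    rw [hrw, integral_sub hWY hYint]
  have hBpos : 0 < (∫ ω, W ω ∂μ) - 1 := by rwa [hB] at hEW
  have hAB : (∫ ω, W ω * Y ω ∂μ) - (∫ ω, Y ω ∂μ) = c * ((∫ ω, W ω ∂μ) - 1) := by
    rw [hc, hA, hB]; field_simp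
  constructor
  · -- unbiasedness over the product measure
    have hSmeas : Measurable fun ω => δ ω * W ω * Y ω + (1 - δ ω * W ω) * c :=
      (((hδm.mul hWm).mul hY).add ((measurable_const.sub (hδm.mul hWm)).mul measurable_const))
    have hmp : ∀ i : Fin N, MeasurePreserving (Function.eval i)
        (Measure.pi fun _ : Fin N => μ) μ :=
      fun i => ⟨measurable_pi_apply i, pi_map_eval' _ i⟩
    have hcomp : ∀ i : Fin N,
        (∫ x, (δ (x i) * W (x i) * Y (x i) + (1 - δ (x i) * W (x i)) * c)
          ∂(Measure.pi fun _ : Fin N => μ)) = ∫ ω, Y ω ∂μ := by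
      intro i
      have h1 : (∫ ω, (δ ω * W ω * Y ω + (1 - δ ω * W ω) * c)
            ∂((Measure.pi fun _ : Fin N => μ).map (Function.eval i)))
          = ∫ x, (δ (x i) * W (x i) * Y (x i) + (1 - δ (x i) * W (x i)) * c)
            ∂(Measure.pi fun _ : Fin N => μ) :=
        integral_map (measurable_pi_apply i).aemeasurable hSmeas.aestronglyMeasurable
      rw [← h1, pi_map_eval', hmean c]
    have hIcomp : ∀ i : Fin N, Integrable
        (fun x : Fin N → Ω => δ (x i) * W (x i) * Y (x i) + (1 - δ (x i) * W (x i)) * c)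
        (Measure.pi fun _ : Fin N => μ) :=
      fun i => ((hmp i).integrable_comp hSmeas.aestronglyMeasurable).2 (hSint c)
    rw [integral_const_mul,
      integral_finset_sum _ (fun i _ => hIcomp i)]
    rw [Finset.sum_congr rfl fun i _ => hcomp i, Finset.sum_const, Finset.card_univ,
      Fintype.card_fin, nsmul_eq_mul]
    rw [← mul_assoc, inv_mul_cancel₀ (by exact_mod_cast hN.ne' : (N:ℝ) ≠ 0), one_mul]
  · intro c'
    rw [hsq c, hsq c', hmean c, hmean c']
    have h4 : 2 * (c' - c) * ((∫ ω, W ω * Y ω ∂μ) - ∫ ω, Y ω ∂μ)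
        = 2 * (c' - c) * (c * ((∫ ω, W ω ∂μ) - 1)) := by rw [hAB]
    nlinarith [h4, mul_nonneg hBpos.le (sq_nonneg (c' - c))]
end
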